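/- arXiv:2508.09259 — 7 statements merged into one kernel-verified Lean document; each statement's English description precedes it below -/
import Mathlib

section
/- Let n be a positive integer and let P₁, P₂ be Hermitian complex n×n matrices satisfying P₁² = 1, P₂² = 1 and the anticommutation relation P₁P₂ + P₂P₁ = 0. Then for any complex n×n matrix ρ that is positive semidefinite with trace 1, the expectation values ⟨P₁⟩ = Re(tr(ρ·P₁)) and ⟨P₂⟩ = Re(tr(ρ·P₂)) satisfy ⟨P₁⟩² + ⟨P₂⟩² ≤ 1. (Lemma 1 of the paper, stated for Hermitian involutions, which includes all anticommuting pairs of Pauli strings.) -/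
open Matrix
open scoped ComplexOrder

lemma psd_trace_re_nonneg {n : ℕ} {M : Matrix (Fin n) (Fin n) ℂ}
    (hM : M.PosSemidef) : 0 ≤ M.trace.re := by
  rw [Matrix.trace]
  simp only [Complex.re_sum, Matrix.diag]
  refine Finset.sum_nonneg fun i _ => ?_
  have := hM.re_dotProduct_nonneg (Pi.single i 1)
  simpa [dotProduct, Matrix.mulVec, Pi.single_apply, Finset.sum_ite_eq,
    Finset.sum_ite_eq'] using this

lemma trace_mul_psd_re_nonneg {n : ℕ} {ρ B : Matrix (Fin n) (Fin n) ℂ}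
    (hρ : ρ.PosSemidef) (hB : B.PosSemidef) : 0 ≤ ((ρ * B).trace).re := by
  obtain ⟨C, rfl⟩ : ∃ C : Matrix (Fin n) (Fin n) ℂ, B = Cᴴ * C := by
    open scoped MatrixOrder in exact CStarAlgebra.nonneg_iff_eq_star_mul_self.mp hB.nonneg
  rw [← Matrix.mul_assoc, Matrix.trace_mul_cycle]
  exact psd_trace_re_nonneg (hρ.mul_mul_conjTranspose_same C)

lemma smul_psd {n : ℕ} {M : Matrix (Fin n) (Fin n) ℂ} {c : ℝ} (hc : 0 ≤ c)
    (hM : M.PosSemidef) : ((c : ℂ) • M).PosSemidef := by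
  refine PosSemidef.of_dotProduct_mulVec_nonneg ?_ ?_
  · show ((c:ℂ) • M)ᴴ = _
    rw [conjTranspose_smul, hM.1.eq]
    congr 1
    simp [Complex.star_def, Complex.conj_ofReal]
  · intro x
    rw [smul_mulVec, dotProduct_smul, smul_eq_mul]
    exact mul_nonneg (by exact_mod_cast Complex.zero_le_real.mpr hc) (hM.dotProduct_mulVec_nonneg x)

lemma exp_le_one {n : ℕ} {ρ P : Matrix (Fin n) (Fin n) ℂ}
    (hρ : ρ.PosSemidef) (htr : ρ.trace = 1)
    (hH : P.IsHermitian) (hsq : P ^ 2 = 1) : ((ρ * P).trace).re ≤ 1 := by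
  have hPP : P * P = 1 := by rw [← pow_two, hsq]
  have hpsd : (1 - P).PosSemidef := by
    have h : 1 - P = ((2⁻¹ : ℝ) : ℂ) • ((1 - P)ᴴ * (1 - P)) := by
      have h1 : (1 - P)ᴴ = 1 - P := by
        rw [conjTranspose_sub, hH.eq, conjTranspose_one]
      rw [h1]
      have h2 : (1 - P) * (1 - P) = (2 : ℂ) • (1 - P) := by
        rw [sub_mul, one_mul, mul_sub, mul_one, hPP]
        module
      rw [h2, smul_smul]
      norm_num
    rw [h]
    exact smul_psd (by norm_num) (Matrix.posSemidef_conjTranspose_mul_self _)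
  have := trace_mul_psd_re_nonneg hρ hpsd
  rw [Matrix.mul_sub, Matrix.mul_one, Matrix.trace_sub, Complex.sub_re, htr] at this
  simp at this
  linarith

/-- Lemma 1: two anticommuting Hermitian involutions have expectation values whose
squares sum to at most 1 in any quantum state. -/
theorem anticommuting_expectations_sq_le_one
    (n : ℕ) (hn : 0 < n)
    (P₁ P₂ : Matrix (Fin n) (Fin n) ℂ)
    (hH₁ : P₁.IsHermitian) (hH₂ : P₂.IsHermitian)
    (hsq₁ : P₁ ^ 2 = 1) (hsq₂ : P₂ ^ 2 = 1)
    (hanti : P₁ * P₂ + P₂ * P₁ = 0)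
    (ρ : Matrix (Fin n) (Fin n) ℂ)
    (hρ : ρ.PosSemidef) (htr : ρ.trace = 1) :
    ((ρ * P₁).trace).re ^ 2 + ((ρ * P₂).trace).re ^ 2 ≤ 1 := by
  set a := ((ρ * P₁).trace).re
  set b := ((ρ * P₂).trace).re
  by_cases h0 : a ^ 2 + b ^ 2 = 0
  · rw [h0]; norm_num
  · set r := Real.sqrt (a ^ 2 + b ^ 2) with hr
    have hr0 : 0 < r := Real.sqrt_pos.mpr (lt_of_le_of_ne (by positivity) (Ne.symm h0))
    have hr2 : r ^ 2 = a ^ 2 + b ^ 2 := Real.sq_sqrt (by positivity)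
    set c : ℂ := ((a / r : ℝ) : ℂ) with hc
    set d : ℂ := ((b / r : ℝ) : ℂ) with hd
    set P : Matrix (Fin n) (Fin n) ℂ := c • P₁ + d • P₂ with hP
    have hHP : P.IsHermitian := by
      show Pᴴ = P
      rw [hP, conjTranspose_add, conjTranspose_smul, conjTranspose_smul, hH₁.eq, hH₂.eq,
        hc, hd]
      simp [Complex.star_def, Complex.conj_ofReal]
    have hcd : c * c + d * d = 1 := by
      have h1 : (a/r)^2 + (b/r)^2 = 1 := by
        field_simp
        linarith [hr2]
      rw [hc, hd, ← Complex.ofReal_mul, ← Complex.ofReal_mul, ← Complex.ofReal_add,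
        show a/r*(a/r)+b/r*(b/r) = 1 from by nlinarith [h1], Complex.ofReal_one]
    have h1 : P₁ * P₁ = (1 : Matrix (Fin n) (Fin n) ℂ) := by rw [← pow_two, hsq₁]
    have h2 : P₂ * P₂ = (1 : Matrix (Fin n) (Fin n) ℂ) := by rw [← pow_two, hsq₂]
    have h21 : P₂ * P₁ = -(P₁ * P₂) := eq_neg_of_add_eq_zero_right hanti
    have hsqP : P ^ 2 = 1 := by
      rw [pow_two, hP, add_mul, mul_add, mul_add, smul_mul_assoc, smul_mul_assoc,
        smul_mul_assoc, smul_mul_assoc, mul_smul_comm, mul_smul_comm, mul_smul_comm,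
        mul_smul_comm, h1, h2, h21, smul_smul, smul_smul, smul_smul, smul_smul]
      have hone : (c*c) • (1 : Matrix (Fin n) (Fin n) ℂ) + (d*d) • 1 = 1 := by
        rw [← add_smul, hcd, one_smul]
      conv_rhs => rw [← hone]
      rw [mul_comm d c]
      module
    have hle := exp_le_one hρ htr hHP hsqP
    have htrP : ((ρ * P).trace).re = r := by
      rw [hP, mul_add, mul_smul_comm, mul_smul_comm, trace_add, trace_smul, trace_smul,
        hc, hd]
      simp only [Complex.add_re, smul_eq_mul, Complex.re_ofReal_mul]
      show a / r * a + b / r * b = r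
      field_simp
      nlinarith [hr2]
    rw [htrP] at hle
    calc a ^ 2 + b ^ 2 = r ^ 2 := hr2.symm
    _ = r * r := sq r
    _ ≤ 1 * 1 := by nlinarith
    _ = 1 := one_mul 1
end

section
/- Let P₁, P₂ be Hermitian complex n×n matrices with P₁² = 1, P₂² = 1 and P₁P₂ + P₂P₁ = 0, let ρ be a complex n×n matrix that is positive semidefinite with trace 1, and let 0 ≤ ε ≤ 1. If Re(tr(ρ·P₁)) ≥ 1 − ε, then |Re(tr(ρ·P₂))| ≤ √(2ε). (Generic form of Corollary 1: an almost-maximal expectation of one involution forces any anticommuting involution to have small expectation.) -/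
open Matrix
open scoped ComplexOrder

lemma re_trace_conjTranspose_mul_self_nonneg {n : ℕ} (N : Matrix (Fin n) (Fin n) ℂ) :
    0 ≤ ((Nᴴ * N).trace).re := by
  rw [Matrix.trace]
  simp only [Matrix.diag_apply, Matrix.mul_apply, Matrix.conjTranspose_apply]
  rw [Complex.re_sum]
  refine Finset.sum_nonneg fun i _ => ?_
  rw [Complex.re_sum]
  refine Finset.sum_nonneg fun j _ => ?_
  simp [← Complex.normSq_eq_conj_mul_self, Complex.normSq_nonneg]


/-- Generic form of Corollary 1: if a Hermitian involution `P₁` has expectation at least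
`1 − ε` in a quantum state `ρ`, then any Hermitian involution `P₂` anticommuting with
`P₁` has expectation at most `√(2ε)` in absolute value. -/
theorem near_maximal_expectation_forces_anticommuting_small
    (n : ℕ) (hn : 0 < n)
    (P₁ P₂ : Matrix (Fin n) (Fin n) ℂ)
    (hH₁ : P₁.IsHermitian) (hH₂ : P₂.IsHermitian)
    (hsq₁ : P₁ ^ 2 = 1) (hsq₂ : P₂ ^ 2 = 1)
    (hanti : P₁ * P₂ + P₂ * P₁ = 0)
    (ρ : Matrix (Fin n) (Fin n) ℂ)
    (hρ : ρ.PosSemidef) (htr : ρ.trace = 1)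
    (ε : ℝ) (hε0 : 0 ≤ ε) (hε1 : ε ≤ 1)
    (hexp : ((ρ * P₁).trace).re ≥ 1 - ε) :
    |((ρ * P₂).trace).re| ≤ Real.sqrt (2 * ε) := by
  set Q : Matrix (Fin n) (Fin n) ℂ := 1 - P₁ with hQ
  set S : Matrix (Fin n) (Fin n) ℂ := (open scoped MatrixOrder in CFC.sqrt ρ) with hS
  have hSS : S * S = ρ := open scoped MatrixOrder in CFC.sqrt_mul_sqrt_self ρ hρ.nonneg
  have hSH : Sᴴ = S := open scoped MatrixOrder in (CFC.sqrt_nonneg ρ).posSemidef.1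
  have hQH : Qᴴ = Q := by rw [hQ, conjTranspose_sub, conjTranspose_one, hH₁]
  -- algebraic identities
  have hQQ : Q * Q = (2 : ℂ) • Q := by
    have h1 : P₁ * P₁ = 1 := by rw [← pow_two]; exact hsq₁
    rw [hQ]
    simp only [mul_sub, sub_mul, one_mul, mul_one, h1]
    rw [two_smul]
    abel
  have hQP : Q * P₂ + P₂ * Q = (2 : ℂ) • P₂ := by
    have h3 : P₁ * P₂ = -(P₂ * P₁) := eq_neg_of_add_eq_zero_left hanti
    rw [hQ]
    simp only [sub_mul, mul_sub, one_mul, mul_one, h3]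
    rw [two_smul]
    abel
  have hPP : P₂ * P₂ = 1 := by rw [← pow_two]; exact hsq₂
  set b : ℝ := ((ρ * P₂).trace).re with hb
  set q : ℝ := ((ρ * Q).trace).re with hq
  -- q ≤ ε
  have hqε : q ≤ ε := by
    have : ρ * Q = ρ - ρ * P₁ := by rw [hQ, mul_sub, mul_one]
    rw [hq, this, trace_sub, Complex.sub_re, htr]
    simp only [Complex.one_re]
    linarith
  -- the quadratic is nonnegative
  have key : ∀ x : ℝ, 0 ≤ (2 * q) * (x * x) + (2 * b) * x + 1 := by
    intro x
    set M : Matrix (Fin n) (Fin n) ℂ := (x : ℂ) • Q + P₂ with hM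
    have hMH : Mᴴ = M := by
      rw [hM, conjTranspose_add, conjTranspose_smul, hQH, hH₂]
      simp
    have hMM : M * M = ((2 * x ^ 2 : ℝ) : ℂ) • Q + ((2 * x : ℝ) : ℂ) • P₂ + 1 := by
      have hqp2 : Q * P₂ = (2 : ℂ) • P₂ - P₂ * Q := by rw [← hQP]; abel
      simp only [hM, add_mul, mul_add, smul_mul_assoc, mul_smul_comm, smul_smul]
      rw [hQQ, hPP, hqp2]
      push_cast
      module
    -- positivity : trace (ρ * (M*M)) = trace ((M*S)ᴴ * (M*S))
    have hpos : 0 ≤ ((ρ * (M * M)).trace).re := by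
      have hmat : ρ * (M * M) = S * (S * (M * M)) := by rw [← hSS, mul_assoc]
      have htr2 : (ρ * (M * M)).trace = ((M * S)ᴴ * (M * S)).trace := by
        rw [conjTranspose_mul, hSH, hMH, hmat, Matrix.trace_mul_comm S (S * (M * M)),
          show S * (M * M) * S = S * M * (M * S) from by noncomm_ring]
      rw [htr2]
      exact re_trace_conjTranspose_mul_self_nonneg _
    have hexpand : ((ρ * (M * M)).trace).re = (2 * q) * (x * x) + (2 * b) * x + 1 := by
      rw [hMM, mul_add, mul_add, trace_add, trace_add, mul_smul_comm, mul_smul_comm,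
        trace_smul, trace_smul, mul_one, htr]
      simp only [Complex.add_re, smul_eq_mul, Complex.re_ofReal_mul, Complex.one_re]
      rw [← hq, ← hb]
      ring
    rw [hexpand] at hpos
    exact hpos
  have hdisc : discrim (2 * q) (2 * b) 1 ≤ 0 := discrim_le_zero key
  rw [discrim] at hdisc
  have hb2 : b ^ 2 ≤ 2 * ε := by nlinarith
  calc |b| ≤ Real.sqrt (2 * ε) := Real.abs_le_sqrt hb2
end

section
/- Let N ≥ 3 be an odd integer, let ρ be an N-qubit quantum state, let 0 ≤ ε ≤ 1, and suppose ⟨U_X⟩_ρ ≥ 1 − ε, where U_X = ∏_{i even} X_i is the product of X over the even 0-based sites 0, 2, …, N−1. Then each of the following expectation values is at most √(2ε) in absolute value: |⟨Z_0·X_1⟩_ρ|, |⟨X_{N-2}·Z_{N-1}⟩_ρ|, and, for every 0 ≤ i ≤ N−3, |⟨Z_i·Z_{i+1}·X_{i+2}⟩_ρ| and |⟨X_i·Z_{i+1}·Z_{i+2}⟩_ρ|. (Corollary 1 of the paper, in 0-based site labels.) -/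
open Matrix
open scoped ComplexOrder

/-- The single-site Pauli `X` operator on site `i` of `N` qubits. -/
def PauliX (N : ℕ) (i : Fin N) : Matrix (Fin N → Fin 2) (Fin N → Fin 2) ℂ :=
  Matrix.of fun f g => if f i ≠ g i ∧ ∀ j, j ≠ i → f j = g j then 1 else 0

/-- The single-site Pauli `Z` operator on site `i` of `N` qubits. -/
def PauliZ (N : ℕ) (i : Fin N) : Matrix (Fin N → Fin 2) (Fin N → Fin 2) ℂ :=
  Matrix.of fun f g => if f = g then (-1 : ℂ) ^ (f i : ℕ) else 0

/-- The uniform `X`-string `U_X = ∏_{i even} X_i` over the even 0-based sites. -/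
noncomputable def UX (N : ℕ) : Matrix (Fin N → Fin 2) (Fin N → Fin 2) ℂ :=
  (((List.finRange N).filter fun i : Fin N => (i : ℕ) % 2 = 0).map (PauliX N)).prod

/-- The 1D graph state on `N` qubits,
`ψ_g(b) = 2^{−N/2}·(−1)^{Σ_{i=0}^{N−2} (b i)·(b (i+1))}`. -/
noncomputable def graphState (N : ℕ) : (Fin N → Fin 2) → ℂ := fun b =>
  (-1 : ℂ) ^ (∑ i : Fin N, if h : (i : ℕ) + 1 < N then
      (b i : ℕ) * (b ⟨(i : ℕ) + 1, h⟩ : ℕ) else 0)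
    / (Real.sqrt 2 : ℂ) ^ N

namespace Cor1

variable {N : ℕ}

def flip (i : Fin N) (f : Fin N → Fin 2) : Fin N → Fin 2 := Function.update f i (f i + 1)

lemma fin2_ne_iff : ∀ a b : Fin 2, a ≠ b ↔ b = a + 1 := by decide
lemma fin2_aa : ∀ a : Fin 2, a + 1 + 1 = a := by decide
lemma fin2_ne_add_one : ∀ a : Fin 2, a ≠ a + 1 := by decide

@[simp] lemma flip_apply_same (i : Fin N) (f) : flip i f i = f i + 1 := by
  simp [flip]

@[simp] lemma flip_apply_ne (i j : Fin N) (f) (h : j ≠ i) : flip i f j = f j := by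
  simp [flip, Function.update_of_ne h]

@[simp] lemma flip_flip (i : Fin N) (f) : flip i (flip i f) = f := by
  funext j
  by_cases h : j = i
  · subst h; simp [fin2_aa]
  · simp [h]

lemma flip_comm (i j : Fin N) (hij : i ≠ j) (f : Fin N → Fin 2) :
    flip i (flip j f) = flip j (flip i f) := by
  funext k
  by_cases hk : k = i
  · subst hk; simp [hij, Ne.symm hij]
  · by_cases hk' : k = j
    · subst hk'; simp [hk, Ne.symm hij, hij]
    · simp [hk, hk']

lemma flip_swap_eq {i j : Fin N} (hij : i ≠ j) {f g : Fin N → Fin 2}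
    (h : flip j g = flip i f) : flip i g = flip j f := by
  have hf : f = flip i (flip j g) := by rw [h, flip_flip]
  rw [hf, ← flip_comm i j hij, flip_flip]

lemma pauliX_eq (i : Fin N) :
    PauliX N i = Matrix.of fun f g => if g = flip i f then 1 else 0 := by
  ext f g
  simp only [PauliX, Matrix.of_apply]
  refine if_congr ?_ rfl rfl
  constructor
  · rintro ⟨h1, h2⟩
    funext j
    by_cases hj : j = i
    · subst hj; simpa using (fin2_ne_iff (f j) (g j)).mp h1
    · simp [hj, ← h2 j hj]
  · rintro rfl
    exact ⟨by simpa using fin2_ne_add_one (f i), fun j hj => (flip_apply_ne i j f hj).symm⟩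

lemma pauliZ_eq (i : Fin N) :
    PauliZ N i = Matrix.diagonal fun f => (-1 : ℂ) ^ (f i : ℕ) := by
  ext f g
  simp only [PauliZ, Matrix.of_apply, Matrix.diagonal_apply]

lemma X_mul_apply (i : Fin N) (M : Matrix (Fin N → Fin 2) (Fin N → Fin 2) ℂ) (f g) :
    (PauliX N i * M) f g = M (flip i f) g := by
  rw [pauliX_eq, Matrix.mul_apply]
  rw [Finset.sum_eq_single (flip i f)]
  · simp
  · intro h _ hh; simp [Matrix.of_apply, hh]
  · simp

lemma mul_X_apply (i : Fin N) (M : Matrix (Fin N → Fin 2) (Fin N → Fin 2) ℂ) (f g) :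
    (M * PauliX N i) f g = M f (flip i g) := by
  rw [pauliX_eq, Matrix.mul_apply]
  rw [Finset.sum_eq_single (flip i g)]
  · simp
  · intro h _ hh
    have : g ≠ flip i h := by
      intro e; exact hh (by rw [e, flip_flip])
    simp [Matrix.of_apply, this]
  · simp

lemma X_mul_X_self (i : Fin N) : PauliX N i * PauliX N i = 1 := by
  ext f g
  rw [mul_X_apply, pauliX_eq]
  by_cases h : f = g
  · subst h; simp [Matrix.one_apply]
  · have : flip i g ≠ flip i f := by
      intro e
      exact h (by rw [← flip_flip i f, ← e, flip_flip])
    simp [Matrix.one_apply, h, this]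

lemma X_comm (i j : Fin N) :
    PauliX N i * PauliX N j = PauliX N j * PauliX N i := by
  by_cases hij : i = j
  · rw [hij]
  ext f g
  rw [mul_X_apply, mul_X_apply]
  simp only [pauliX_eq, Matrix.of_apply]
  by_cases h : flip j g = flip i f
  · rw [if_pos h, if_pos (flip_swap_eq hij h)]
  · rw [if_neg h, if_neg fun e => h (flip_swap_eq (Ne.symm hij) e)]

lemma Z_mul_Z_self (i : Fin N) : PauliZ N i * PauliZ N i = 1 := by
  rw [pauliZ_eq, Matrix.diagonal_mul_diagonal]
  have : (fun f : Fin N → Fin 2 => (-1 : ℂ) ^ (f i : ℕ) * (-1 : ℂ) ^ (f i : ℕ))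
      = fun _ => (1 : ℂ) := by
    funext f; rw [← mul_pow]; norm_num
  rw [this, Matrix.diagonal_one]

lemma neg_one_pow_fin2 (a : Fin 2) :
    (-1 : ℂ) ^ (((a + 1 : Fin 2)) : ℕ) = -(-1 : ℂ) ^ (a : ℕ) := by
  fin_cases a
  · norm_num
  · norm_num [show ((1 : Fin 2) + 1) = 0 from rfl]

lemma Z_mul_X_same (i : Fin N) :
    PauliZ N i * PauliX N i = -(PauliX N i * PauliZ N i) := by
  ext f g
  rw [pauliZ_eq, Matrix.neg_apply, Matrix.diagonal_mul, Matrix.mul_diagonal, pauliX_eq]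
  by_cases h : g = flip i f
  · subst h
    simp only [Matrix.of_apply, if_pos rfl, flip_apply_same]
    simp [neg_one_pow_fin2]
  · simp [Matrix.of_apply, h]

lemma Z_mul_X_ne (i j : Fin N) (hij : i ≠ j) :
    PauliZ N i * PauliX N j = PauliX N j * PauliZ N i := by
  ext f g
  rw [pauliZ_eq, Matrix.diagonal_mul, Matrix.mul_diagonal, pauliX_eq]
  by_cases h : g = flip j f
  · subst h
    simp [flip_apply_ne j i f hij]
  · simp [Matrix.of_apply, h]

lemma X_herm (i : Fin N) : (PauliX N i)ᴴ = PauliX N i := by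
  ext f g
  rw [Matrix.conjTranspose_apply, pauliX_eq]
  have : f = flip i g ↔ g = flip i f := by
    constructor <;> (intro h; rw [h, flip_flip])
  by_cases h : g = flip i f <;> simp [Matrix.of_apply, this, h]

lemma Z_herm (i : Fin N) : (PauliZ N i)ᴴ = PauliZ N i := by
  ext f g
  rw [Matrix.conjTranspose_apply, pauliZ_eq, Matrix.diagonal_apply, Matrix.diagonal_apply]
  by_cases h : f = g
  · subst h; simp [star_pow]
  · simp [h, Ne.symm h]


lemma commute_X_prod (i : Fin N) (t : List (Fin N)) :
    Commute (PauliX N i) ((t.map (PauliX N)).prod) :=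
  Commute.list_prod_right _ _ (by
    intro x hx
    obtain ⟨j, _, rfl⟩ := List.mem_map.mp hx
    exact X_comm i j)

lemma prod_X_sq (l : List (Fin N)) :
    (l.map (PauliX N)).prod * (l.map (PauliX N)).prod = 1 := by
  induction l with
  | nil => simp
  | cons i t ih =>
    simp only [List.map_cons, List.prod_cons]
    rw [(commute_X_prod i t).symm.mul_mul_mul_comm, X_mul_X_self, ih, one_mul]

lemma prod_X_herm (l : List (Fin N)) :
    ((l.map (PauliX N)).prod)ᴴ = (l.map (PauliX N)).prod := by
  rw [Matrix.conjTranspose_list_prod]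
  have h1 : (Matrix.conjTranspose ∘ PauliX N) = PauliX N := by
    funext j; exact X_herm j
  have h2 : (List.map Matrix.conjTranspose (List.map (PauliX N) l)).reverse
      = List.map (PauliX N) l.reverse := by
    rw [List.map_map, h1, ← List.map_reverse]
  rw [h2]
  refine List.Perm.prod_eq' ((List.reverse_perm l).map _) ?_
  refine List.Pairwise.map _ (fun a b h => h) ?_
  exact List.pairwise_iff_forall_sublist.mpr (fun {a b} _ => X_comm a b)

lemma mul_prod_X (A : Matrix (Fin N → Fin 2) (Fin N → Fin 2) ℂ) (σ : Fin N → ℂ)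
    (hA : ∀ j, A * PauliX N j = σ j • (PauliX N j * A)) (l : List (Fin N)) :
    A * (l.map (PauliX N)).prod = (l.map σ).prod • ((l.map (PauliX N)).prod * A) := by
  induction l with
  | nil => simp
  | cons i t ih =>
    simp only [List.map_cons, List.prod_cons]
    rw [← mul_assoc, hA i, smul_mul_assoc, mul_assoc, ih, mul_smul_comm, smul_smul,
      ← mul_assoc]

lemma map_sign_prod (σ : Fin N → ℂ) (l : List (Fin N)) (hl : l.Nodup) (k : Fin N)
    (hk : k ∈ l) (hσk : σ k = -1) (hσ : ∀ j ∈ l, j ≠ k → σ j = 1) :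
    (l.map σ).prod = -1 := by
  induction l with
  | nil => simp at hk
  | cons i t ih =>
    obtain ⟨hit, hnd⟩ := List.nodup_cons.mp hl
    simp only [List.map_cons, List.prod_cons]
    rcases List.mem_cons.mp hk with rfl | hkt
    · have h1 : (t.map σ).prod = 1 := by
        refine List.prod_eq_one ?_
        intro x hx
        obtain ⟨j, hj, rfl⟩ := List.mem_map.mp hx
        exact hσ j (List.mem_cons_of_mem _ hj) (fun e => hit (e ▸ hj))
      rw [hσk, h1, mul_one]
    · have hi : σ i = 1 :=
        hσ i List.mem_cons_self (fun e => hit (e ▸ hkt))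
      rw [hi, one_mul]
      exact ih hnd hkt (fun j hj hjk => hσ j (List.mem_cons_of_mem _ hj) hjk)

lemma UX_herm : (UX N)ᴴ = UX N := prod_X_herm _

lemma UX_sq : UX N * UX N = 1 := prod_X_sq _

lemma anticomm_UX (A : Matrix (Fin N → Fin 2) (Fin N → Fin 2) ℂ) (σ : Fin N → ℂ)
    (hA : ∀ j, A * PauliX N j = σ j • (PauliX N j * A))
    (k : Fin N) (hk : (k : ℕ) % 2 = 0) (hσk : σ k = -1)
    (hσ : ∀ j : Fin N, (j : ℕ) % 2 = 0 → j ≠ k → σ j = 1) :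
    A * UX N = -(UX N * A) := by
  unfold UX
  rw [mul_prod_X A σ hA]
  have hmem : k ∈ (List.finRange N).filter fun i : Fin N => (i : ℕ) % 2 = 0 :=
    List.mem_filter.mpr ⟨List.mem_finRange k, by simpa using hk⟩
  have hnd : ((List.finRange N).filter fun i : Fin N => (i : ℕ) % 2 = 0).Nodup :=
    (List.nodup_finRange N).filter _
  rw [map_sign_prod σ _ hnd k hmem hσk (fun j hj hjk =>
    hσ j (by simpa using (List.mem_filter.mp hj).2) hjk)]
  simp

section CS

variable {m : Type*} [Fintype m] [DecidableEq m]

noncomputable def vec (A : Matrix m m ℂ) : EuclideanSpace ℂ (m × m) := WithLp.toLp 2 fun p => A p.1 p.2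

lemma trace_inner (A B : Matrix m m ℂ) :
    (Aᴴ * B).trace = inner ℂ (vec A) (vec B) := by
  rw [PiLp.inner_apply]
  simp only [RCLike.inner_apply, Matrix.trace, Matrix.diag_apply, Matrix.mul_apply,
    Matrix.conjTranspose_apply, vec, starRingEnd_apply, PiLp.toLp_apply]
  rw [Fintype.sum_prod_type]
  rw [Finset.sum_comm]
  exact Finset.sum_congr rfl fun _ _ => Finset.sum_congr rfl fun _ _ => mul_comm _ _

lemma norm_vec (A : Matrix m m ℂ) : ‖vec A‖ = Real.sqrt ((Aᴴ * A).trace.re) := by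
  rw [EuclideanSpace.norm_eq]
  congr 1
  simp only [Matrix.trace, Matrix.diag_apply, Matrix.mul_apply, Matrix.conjTranspose_apply]
  rw [Complex.re_sum]
  rw [Fintype.sum_prod_type]
  rw [Finset.sum_comm]
  refine Finset.sum_congr rfl fun i _ => ?_
  rw [Complex.re_sum]
  refine Finset.sum_congr rfl fun j _ => ?_
  simp only [vec, PiLp.toLp_apply]
  rw [mul_comm, Complex.star_def, Complex.mul_conj, Complex.ofReal_re, Complex.normSq_eq_norm_sq]

lemma trace_CS (A B : Matrix m m ℂ) :
    ‖(Aᴴ * B).trace‖ ≤ Real.sqrt ((Aᴴ * A).trace.re) * Real.sqrt ((Bᴴ * B).trace.re) := by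
  rw [trace_inner, ← norm_vec, ← norm_vec]
  exact norm_inner_le_norm _ _

end CS

open scoped MatrixOrder in
lemma key {m : Type*} [Fintype m] [DecidableEq m]
    (ρ U A : Matrix m m ℂ)
    (hρ : ρ.PosSemidef) (htr : ρ.trace = 1)
    (hUh : Uᴴ = U) (hU2 : U * U = 1)
    (hAU : A * U = -(U * A)) (hA1 : Aᴴ * A = 1)
    (ε : ℝ) (hε : ((ρ * U).trace).re ≥ 1 - ε) :
    |((ρ * A).trace).re| ≤ Real.sqrt (2 * ε) := by
  set s := CFC.sqrt ρ with hs_def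
  have hs : s * s = ρ := CFC.sqrt_mul_sqrt_self ρ (Matrix.nonneg_iff_posSemidef.mpr hρ)
  have hsh : sᴴ = s := (Matrix.nonneg_iff_posSemidef.mp (CFC.sqrt_nonneg ρ)).isHermitian
  set P : Matrix m m ℂ := (2⁻¹ : ℂ) • (1 - U) with hP_def
  have hPh : Pᴴ = P := by
    rw [hP_def, Matrix.conjTranspose_smul, Matrix.conjTranspose_sub,
      Matrix.conjTranspose_one, hUh]
    norm_num
  have hPP : P * P = P := by
    have h1 : (1 - U) * (1 - U) = (2 : ℂ) • (1 - U) := by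
      rw [mul_sub, sub_mul, sub_mul, hU2]
      simp only [one_mul, mul_one]
      rw [two_smul]
      abel
    rw [hP_def, smul_mul_assoc, mul_smul_comm, h1, smul_smul, smul_smul]
    norm_num
  have hsplit : P * A + A * P = A := by
    have h1 : (1 - U) * A + A * (1 - U) = (2 : ℂ) • A := by
      rw [sub_mul, mul_sub, one_mul, mul_one, hAU, sub_neg_eq_add, two_smul]
      abel
    rw [hP_def, smul_mul_assoc, mul_smul_comm, ← smul_add, h1, smul_smul]
    norm_num
  have hAA : A * Aᴴ = 1 := mul_eq_one_comm.mp hA1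
  have gen : ∀ B C : Matrix m m ℂ,
      ((B * s)ᴴ * (C * s)).trace = (ρ * (Bᴴ * C)).trace := by
    intro B C
    rw [Matrix.conjTranspose_mul, hsh, Matrix.mul_assoc, Matrix.trace_mul_comm,
      Matrix.mul_assoc, Matrix.mul_assoc, hs, ← Matrix.mul_assoc, Matrix.trace_mul_comm]
  have t1 : ((P * s)ᴴ * (A * s)).trace = (ρ * (P * A)).trace := by rw [gen, hPh]
  have t2 : ((P * s)ᴴ * (P * s)).trace = (ρ * P).trace := by rw [gen, hPh, hPP]
  have t3 : ((A * s)ᴴ * (A * s)).trace = 1 := by rw [gen, hA1, Matrix.mul_one, htr]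
  have t4 : ((Aᴴ * s)ᴴ * (P * s)).trace = (ρ * (A * P)).trace := by
    rw [gen, Matrix.conjTranspose_conjTranspose]
  have t5 : ((Aᴴ * s)ᴴ * (Aᴴ * s)).trace = 1 := by
    rw [gen, Matrix.conjTranspose_conjTranspose, hAA, Matrix.mul_one, htr]
  have b1 : ‖(ρ * (P * A)).trace‖ ≤ Real.sqrt ((ρ * P).trace.re) * Real.sqrt 1 := by
    have h := trace_CS (P * s) (A * s)
    rw [t1, t2, t3] at h
    simpa using h
  have b2 : ‖(ρ * (A * P)).trace‖ ≤ Real.sqrt 1 * Real.sqrt ((ρ * P).trace.re) := by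
    have h := trace_CS (Aᴴ * s) (P * s)
    rw [t4, t5, t2] at h
    simpa using h
  have hρP : (ρ * P).trace.re ≤ ε / 2 := by
    have h1 : (ρ * P).trace = (2⁻¹ : ℂ) * (1 - (ρ * U).trace) := by
      rw [hP_def, Matrix.mul_smul, Matrix.trace_smul, smul_eq_mul, Matrix.mul_sub,
        Matrix.mul_one, Matrix.trace_sub, htr]
    have h2 : (ρ * P).trace.re = 2⁻¹ * (1 - (ρ * U).trace.re) := by
      rw [h1, show (2⁻¹ : ℂ) = ((2⁻¹ : ℝ) : ℂ) by norm_num,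
        Complex.re_ofReal_mul, Complex.sub_re, Complex.one_re]
    rw [h2]
    linarith
  have hsum : (ρ * A).trace = (ρ * (P * A)).trace + (ρ * (A * P)).trace := by
    rw [← Matrix.trace_add, ← Matrix.mul_add, hsplit]
  have habs : |((ρ * A).trace).re| ≤ ‖(ρ * A).trace‖ := by
    exact Complex.abs_re_le_norm _
  have hsq : Real.sqrt ((ρ * P).trace.re) ≤ Real.sqrt (ε / 2) := Real.sqrt_le_sqrt hρP
  have hfin : ‖(ρ * A).trace‖ ≤ 2 * Real.sqrt (ε / 2) := by
    rw [hsum]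
    calc ‖(ρ * (P * A)).trace + (ρ * (A * P)).trace‖
        ≤ ‖(ρ * (P * A)).trace‖ + ‖(ρ * (A * P)).trace‖ := norm_add_le _ _
      _ ≤ Real.sqrt ((ρ * P).trace.re) * Real.sqrt 1
          + Real.sqrt 1 * Real.sqrt ((ρ * P).trace.re) := add_le_add b1 b2
      _ = 2 * Real.sqrt ((ρ * P).trace.re) := by
          rw [Real.sqrt_one]; ring
      _ ≤ 2 * Real.sqrt (ε / 2) := by linarith
  have h2e : 2 * Real.sqrt (ε / 2) = Real.sqrt (2 * ε) := by
    rw [show (2 * ε) = 4 * (ε / 2) by ring, Real.sqrt_mul (by norm_num : (0:ℝ) ≤ 4),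
      show Real.sqrt 4 = 2 by
        rw [show (4 : ℝ) = 2 ^ 2 by norm_num, Real.sqrt_sq (by norm_num : (0:ℝ) ≤ 2)]]
  linarith [habs, hfin, h2e.le, h2e.ge]

lemma move (j : Fin N) (B C : Matrix (Fin N → Fin 2) (Fin N → Fin 2) ℂ) (c₁ c₂ : ℂ)
    (hB : B * PauliX N j = c₁ • (PauliX N j * B))
    (hC : C * PauliX N j = c₂ • (PauliX N j * C)) :
    (B * C) * PauliX N j = (c₁ * c₂) • (PauliX N j * (B * C)) := by
  rw [mul_assoc, hC, mul_smul_comm, ← mul_assoc, hB, smul_mul_assoc, smul_smul,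
    mul_comm c₂ c₁, mul_assoc]

lemma hZX (a j : Fin N) : PauliZ N a * PauliX N j
    = (if j = a then (-1 : ℂ) else 1) • (PauliX N j * PauliZ N a) := by
  by_cases h : j = a
  · subst h
    rw [if_pos rfl, Z_mul_X_same, neg_one_smul]
  · rw [if_neg h, one_smul, Z_mul_X_ne a j (fun e => h e.symm)]

lemma hXX (b j : Fin N) : PauliX N b * PauliX N j
    = (1 : ℂ) • (PauliX N j * PauliX N b) := by
  rw [one_smul, X_comm]

lemma herm_unit_mul {B C : Matrix (Fin N → Fin 2) (Fin N → Fin 2) ℂ}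
    (hB : Bᴴ * B = 1) (hC : Cᴴ * C = 1) : (B * C)ᴴ * (B * C) = 1 := by
  rw [Matrix.conjTranspose_mul, Matrix.mul_assoc, ← Matrix.mul_assoc Bᴴ, hB,
    Matrix.one_mul, hC]

lemma X_unit (i : Fin N) : (PauliX N i)ᴴ * PauliX N i = 1 := by
  rw [X_herm, X_mul_X_self]

lemma Z_unit (i : Fin N) : (PauliZ N i)ᴴ * PauliZ N i = 1 := by
  rw [Z_herm, Z_mul_Z_self]

end Cor1

/-- Corollary 1 (0-based labels): if `⟨U_X⟩ ≥ 1 − ε` in an `N`-qubit state `ρ` (`N ≥ 3`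
odd), then the boundary terms `Z_0 X_1`, `X_{N−2} Z_{N−1}` and all bulk terms
`Z_i Z_{i+1} X_{i+2}`, `X_i Z_{i+1} Z_{i+2}` have expectation at most `√(2ε)` in
absolute value. -/
theorem corollary1_anticommuting_terms_small
    (N : ℕ) (hN : 3 ≤ N) (hodd : Odd N)
    (ρ : Matrix (Fin N → Fin 2) (Fin N → Fin 2) ℂ)
    (hρ : ρ.PosSemidef) (htr : ρ.trace = 1)
    (ε : ℝ) (hε0 : 0 ≤ ε) (hε1 : ε ≤ 1)
    (hU : ((ρ * UX N).trace).re ≥ 1 - ε) :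
    |((ρ * (PauliZ N ⟨0, by omega⟩ * PauliX N ⟨1, by omega⟩)).trace).re| ≤ Real.sqrt (2 * ε) ∧
    |((ρ * (PauliX N ⟨N - 2, by omega⟩ * PauliZ N ⟨N - 1, by omega⟩)).trace).re|
      ≤ Real.sqrt (2 * ε) ∧
    ∀ i : ℕ, ∀ hi : i + 2 < N,
      |((ρ * (PauliZ N ⟨i, by omega⟩ * PauliZ N ⟨i + 1, by omega⟩ *
          PauliX N ⟨i + 2, hi⟩)).trace).re| ≤ Real.sqrt (2 * ε) ∧
      |((ρ * (PauliX N ⟨i, by omega⟩ * PauliZ N ⟨i + 1, by omega⟩ *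
          PauliZ N ⟨i + 2, hi⟩)).trace).re| ≤ Real.sqrt (2 * ε) := by
  obtain ⟨M, hM⟩ := hodd
  have main : ∀ (A : Matrix (Fin N → Fin 2) (Fin N → Fin 2) ℂ) (σ : Fin N → ℂ),
      (∀ j, A * PauliX N j = σ j • (PauliX N j * A)) →
      ∀ k : Fin N, (k : ℕ) % 2 = 0 → σ k = -1 →
      (∀ j : Fin N, (j : ℕ) % 2 = 0 → j ≠ k → σ j = 1) →
      Aᴴ * A = 1 →
      |((ρ * A).trace).re| ≤ Real.sqrt (2 * ε) := by
    intro A σ hA k hk hσk hσ hA1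
    exact Cor1.key ρ (UX N) A hρ htr Cor1.UX_herm Cor1.UX_sq
      (Cor1.anticomm_UX A σ hA k hk hσk hσ) hA1 ε hU
  refine ⟨?_, ?_, ?_⟩
  · -- Z_0 X_1
    set a : Fin N := ⟨0, by omega⟩
    set b : Fin N := ⟨1, by omega⟩
    refine main _ (fun j => (if j = a then (-1 : ℂ) else 1) * 1)
      (fun j => Cor1.move j _ _ _ _ (Cor1.hZX a j) (Cor1.hXX b j)) a rfl ?_ ?_
      (Cor1.herm_unit_mul (Cor1.Z_unit a) (Cor1.X_unit b))
    · simp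
    · intro j _ hjk
      simp [hjk]
  · -- X_{N-2} Z_{N-1}
    set a : Fin N := ⟨N - 2, by omega⟩
    set b : Fin N := ⟨N - 1, by omega⟩
    refine main _ (fun j => (1 : ℂ) * (if j = b then (-1 : ℂ) else 1))
      (fun j => Cor1.move j _ _ _ _ (Cor1.hXX a j) (Cor1.hZX b j)) b (by simp [b]; omega) ?_ ?_
      (Cor1.herm_unit_mul (Cor1.X_unit a) (Cor1.Z_unit b))
    · simp
    · intro j _ hjk
      simp [hjk]
  · intro i hi
    set a : Fin N := ⟨i, by omega⟩ with ha
    set b : Fin N := ⟨i + 1, by omega⟩ with hb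
    set c : Fin N := ⟨i + 2, hi⟩ with hc
    have hab : a ≠ b := by simp only [ne_eq, a, b, Fin.mk.injEq]; omega
    have hbc : b ≠ c := by simp only [ne_eq, b, c, Fin.mk.injEq]; omega
    constructor
    · -- Z_i Z_{i+1} X_{i+2}
      have hA1 : (PauliZ N a * PauliZ N b * PauliX N c)ᴴ *
          (PauliZ N a * PauliZ N b * PauliX N c) = 1 :=
        Cor1.herm_unit_mul (Cor1.herm_unit_mul (Cor1.Z_unit a) (Cor1.Z_unit b))
          (Cor1.X_unit c)
      have hAj : ∀ j, (PauliZ N a * PauliZ N b * PauliX N c) * PauliX N j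
          = (((if j = a then (-1 : ℂ) else 1) * (if j = b then (-1 : ℂ) else 1)) * 1) •
            (PauliX N j * (PauliZ N a * PauliZ N b * PauliX N c)) :=
        fun j => Cor1.move j _ _ _ _
          (Cor1.move j _ _ _ _ (Cor1.hZX a j) (Cor1.hZX b j)) (Cor1.hXX c j)
      rcases Nat.even_or_odd i with ⟨w, hw⟩ | ⟨w, hw⟩
      · refine main _ _ hAj a (show i % 2 = 0 by omega) (by simp [hab]) ?_ hA1
        intro j hj hjk
        have hjb : j ≠ b := by
          intro e
          subst e
          have h2 : (i + 1) % 2 = 0 := hj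
          omega
        simp [hjk, hjb]
      · refine main _ _ hAj b (show (i + 1) % 2 = 0 by omega) (by simp [hab.symm]) ?_ hA1
        intro j hj hjk
        have hja : j ≠ a := by
          intro e
          subst e
          have h2 : i % 2 = 0 := hj
          omega
        simp [hjk, hja]
    · -- X_i Z_{i+1} Z_{i+2}
      have hA1 : (PauliX N a * PauliZ N b * PauliZ N c)ᴴ *
          (PauliX N a * PauliZ N b * PauliZ N c) = 1 :=
        Cor1.herm_unit_mul (Cor1.herm_unit_mul (Cor1.X_unit a) (Cor1.Z_unit b))
          (Cor1.Z_unit c)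
      have hAj : ∀ j, (PauliX N a * PauliZ N b * PauliZ N c) * PauliX N j
          = (((1 : ℂ) * (if j = b then (-1 : ℂ) else 1)) * (if j = c then (-1 : ℂ) else 1)) •
            (PauliX N j * (PauliX N a * PauliZ N b * PauliZ N c)) :=
        fun j => Cor1.move j _ _ _ _
          (Cor1.move j _ _ _ _ (Cor1.hXX a j) (Cor1.hZX b j)) (Cor1.hZX c j)
      rcases Nat.even_or_odd i with ⟨w, hw⟩ | ⟨w, hw⟩
      · refine main _ _ hAj c (show (i + 2) % 2 = 0 by omega) (by simp [Ne.symm hbc]) ?_ hA1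
        intro j hj hjk
        have hjb : j ≠ b := by
          intro e
          subst e
          have h2 : (i + 1) % 2 = 0 := hj
          omega
        simp [hjk, hjb]
      · refine main _ _ hAj b (show (i + 1) % 2 = 0 by omega) (by simp [hbc]) ?_ hA1
        intro j hj hjk
        have hjc : j ≠ c := by
          intro e
          subst e
          have h2 : (i + 2) % 2 = 0 := hj
          omega
        simp [hjk, hjc]
end

section
/- Let P₁, …, P_n be pairwise commuting Hermitian complex d×d matrices with Pᵢ² = 1 for each i, and let ψ ∈ ℂ^d be a unit vector such that the joint fixed space {v ∈ ℂ^d : Pᵢ v = v for all i} is exactly the one-dimensional span of ψ. Let ρ be a complex d×d matrix that is positive semidefinite with trace 1, and let ε₁, …, ε_n ≥ 0 satisfy Re(tr(ρ·Pᵢ)) ≥ 1 − εᵢ for each i. Then the fidelity satisfies ⟨ψ|ρ|ψ⟩ ≥ 1 − (Σᵢ εᵢ)/2. (First part of Lemma 2.) -/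
open Matrix
open scoped ComplexOrder

namespace StabAux

variable {d : ℕ}

/-- Product of the first `k` matrices. -/
noncomputable def F (G : ℕ → Matrix (Fin d) (Fin d) ℂ) : ℕ → Matrix (Fin d) (Fin d) ℂ
  | 0 => 1
  | k + 1 => F G k * G k

lemma commute_F (G : ℕ → Matrix (Fin d) (Fin d) ℂ) (A : Matrix (Fin d) (Fin d) ℂ)
    (h : ∀ k, Commute A (G k)) : ∀ k, Commute A (F G k)
  | 0 => Commute.one_right A
  | k + 1 => (commute_F G A h k).mul_right (h k)

lemma herm_F (G : ℕ → Matrix (Fin d) (Fin d) ℂ) (hH : ∀ k, (G k).IsHermitian)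
    (hc : ∀ k l, Commute (G k) (G l)) : ∀ k, (F G k).IsHermitian
  | 0 => isHermitian_one
  | k + 1 => by
    have ih := herm_F G hH hc k
    have hcm : Commute (G k) (F G k) := commute_F G (G k) (fun l => hc k l) k
    show (F G k * G k)ᴴ = F G k * G k
    rw [conjTranspose_mul, (hH k).eq, ih.eq]
    exact hcm.eq

lemma idem_F (G : ℕ → Matrix (Fin d) (Fin d) ℂ)
    (hc : ∀ k l, Commute (G k) (G l)) (hid : ∀ k, G k * G k = G k) :
    ∀ k, F G k * F G k = F G k
  | 0 => one_mul 1
  | k + 1 => by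
    have ih := idem_F G hc hid k
    have hcm : G k * F G k = F G k * G k := commute_F G (G k) (fun l => hc k l) k
    show F G k * G k * (F G k * G k) = F G k * G k
    calc F G k * G k * (F G k * G k) = F G k * (G k * F G k * G k) := by
          simp only [mul_assoc]
      _ = F G k * (F G k * (G k * G k)) := by rw [hcm, mul_assoc]
      _ = F G k * G k := by rw [hid k, ← mul_assoc, ih]

lemma psd_of_proj {M : Matrix (Fin d) (Fin d) ℂ} (hH : M.IsHermitian)
    (hid : M * M = M) : M.PosSemidef := by
  have h : Mᴴ * M = M := by rw [hH.eq, hid]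
  simpa [h] using posSemidef_conjTranspose_mul_self M

lemma psd_mul_proj {E Fm : Matrix (Fin d) (Fin d) ℂ} (hEH : E.IsHermitian)
    (hEid : E * E = E) (hF : Fm.PosSemidef) (hcm : Commute E Fm) :
    (E * Fm).PosSemidef := by
  have h : E * Fm = Eᴴ * Fm * E := by
    rw [hEH.eq, hcm.eq, mul_assoc, hEid]
  rw [h]
  exact hF.conjTranspose_mul_mul_same E

lemma one_sub_idem {M : Matrix (Fin d) (Fin d) ℂ} (hid : M * M = M) :
    (1 - M) * (1 - M) = 1 - M := by
  have : (1 - M) * (1 - M) = 1 - M - M + M * M := by noncomm_ring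
  rw [this, hid]; abel

lemma union_bound (G : ℕ → Matrix (Fin d) (Fin d) ℂ)
    (hH : ∀ k, (G k).IsHermitian) (hc : ∀ k l, Commute (G k) (G l))
    (hid : ∀ k, G k * G k = G k) :
    ∀ k, ((∑ i ∈ Finset.range k, (1 - G i)) + F G k - 1).PosSemidef
  | 0 => by simpa [F] using (Matrix.PosSemidef.zero (n := Fin d) (R := ℂ))
  | k + 1 => by
    have ih := union_bound G hH hc hid k
    have hcm : G k * F G k = F G k * G k := commute_F G (G k) (fun l => hc k l) k
    have key : (∑ i ∈ Finset.range (k+1), (1 - G i)) + F G (k+1) - 1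
        = (1 - G k) * (1 - F G k)
          + ((∑ i ∈ Finset.range k, (1 - G i)) + F G k - 1) := by
      rw [Finset.sum_range_succ]
      show _ + F G k * G k - 1 = _
      have h2 : (1 - G k) * (1 - F G k) = 1 - G k - F G k + F G k * G k := by
        have : (1 - G k) * (1 - F G k) = 1 - G k - F G k + G k * F G k := by noncomm_ring
        rw [this, hcm]
      rw [h2]; abel
    rw [key]
    refine Matrix.PosSemidef.add ?_ ih
    refine psd_mul_proj (isHermitian_one.sub (hH k)) (one_sub_idem (hid k)) ?_ ?_
    · exact psd_of_proj (isHermitian_one.sub (herm_F G hH hc k))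
        (one_sub_idem (idem_F G hc hid k))
    · have c1 : Commute (G k) (F G k) := hcm
      have c2 : Commute (1 - G k) (F G k) := (Commute.one_left _).sub_left c1
      exact (Commute.one_right _).sub_right c2

lemma psd_diag_re_nonneg {M : Matrix (Fin d) (Fin d) ℂ} (hM : M.PosSemidef) (i : Fin d) :
    0 ≤ (M i i).re := by
  have h := hM.dotProduct_mulVec_nonneg (Pi.single i 1)
  have he : star (Pi.single i 1) ⬝ᵥ (M *ᵥ Pi.single i (1:ℂ)) = M i i := by
    simp [dotProduct, mulVec, Pi.single_apply]
  rw [he] at h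
  exact (Complex.le_def.mp h).1

open scoped MatrixOrder in
lemma trace_mul_psd_nonneg {A B : Matrix (Fin d) (Fin d) ℂ}
    (hA : A.PosSemidef) (hB : B.PosSemidef) : 0 ≤ ((A * B).trace).re := by
  have h1 : (A * B).trace = (CFC.sqrt A * B * CFC.sqrt A).trace := by
    conv_lhs => rw [← CFC.sqrt_mul_sqrt_self A hA.nonneg]
    rw [Matrix.trace_mul_comm, ← Matrix.mul_assoc, Matrix.trace_mul_cycle]
  have h2 : (CFC.sqrt A * B * CFC.sqrt A).PosSemidef := by
    have := hB.conjTranspose_mul_mul_same (CFC.sqrt A)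
    rwa [(CFC.sqrt_nonneg A).posSemidef.isHermitian.eq] at this
  rw [h1, Matrix.trace, Complex.re_sum]
  exact Finset.sum_nonneg fun i _ => psd_diag_re_nonneg h2 i

end StabAux

open StabAux

/-- First part of Lemma 2. -/
theorem fidelity_lower_bound_from_stabilizers
    (n d : ℕ)
    (P : Fin n → Matrix (Fin d) (Fin d) ℂ)
    (hHerm : ∀ i, (P i).IsHermitian)
    (hcomm : ∀ i j, P i * P j = P j * P i)
    (hsq : ∀ i, P i ^ 2 = 1)
    (ψ : Fin d → ℂ) (hψ : star ψ ⬝ᵥ ψ = 1)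
    (hfix : ∀ v : Fin d → ℂ, (∀ i, (P i) *ᵥ v = v) ↔ ∃ c : ℂ, v = c • ψ)
    (ρ : Matrix (Fin d) (Fin d) ℂ)
    (hρ : ρ.PosSemidef) (htr : ρ.trace = 1)
    (ε : Fin n → ℝ) (hε : ∀ i, 0 ≤ ε i)
    (hexp : ∀ i, ((ρ * P i).trace).re ≥ 1 - ε i) :
    (star ψ ⬝ᵥ (ρ *ᵥ ψ)).re ≥ 1 - (∑ i, ε i) / 2 := by
  classical
  -- the extended family of projectors
  set G : ℕ → Matrix (Fin d) (Fin d) ℂ :=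
    fun k => if h : k < n then (2⁻¹ : ℂ) • (1 + P ⟨k, h⟩) else 1 with hG
  have hGH : ∀ k, (G k).IsHermitian := by
    intro k
    by_cases h : k < n
    · simp only [hG, dif_pos h]
      have : ((2⁻¹ : ℂ) • (1 + P ⟨k, h⟩)).IsHermitian := by
        unfold Matrix.IsHermitian
        rw [conjTranspose_smul, conjTranspose_add, conjTranspose_one, (hHerm _).eq]
        norm_num
      exact this
    · simp only [hG, dif_neg h]; exact isHermitian_one
  have hGc : ∀ k l, Commute (G k) (G l) := by
    intro k l
    by_cases hk : k < n <;> by_cases hl : l < n <;>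
      simp only [hG, dif_pos, dif_neg, hk, hl]
    · apply Commute.smul_left; apply Commute.smul_right
      apply Commute.add_left <;> apply Commute.add_right
      · exact Commute.one_left 1
      · exact Commute.one_left _
      · exact Commute.one_right _
      · exact hcomm _ _
    · exact Commute.one_right _
    · exact Commute.one_left _
    · exact Commute.one_left _
  have hGid : ∀ k, G k * G k = G k := by
    intro k
    by_cases h : k < n
    · simp only [hG, dif_pos h]
      rw [smul_mul_smul_comm]
      have hP2 : P ⟨k, h⟩ * P ⟨k, h⟩ = 1 := by rw [← pow_two]; exact hsq _
      have : (1 + P ⟨k, h⟩) * (1 + P ⟨k, h⟩) = (2 : ℂ) • (1 + P ⟨k, h⟩) := by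
        have expand : (1 + P ⟨k, h⟩) * (1 + P ⟨k, h⟩)
            = 1 + P ⟨k, h⟩ + P ⟨k, h⟩ + P ⟨k, h⟩ * P ⟨k, h⟩ := by noncomm_ring
        rw [expand, hP2, two_smul]
        abel
      rw [this, smul_smul]
      norm_num
    · simp only [hG, dif_neg h, one_mul]
  -- the projector onto the joint fixed space
  set Pr : Matrix (Fin d) (Fin d) ℂ := F G n with hPrdef
  have hPrH : Pr.IsHermitian := herm_F G hGH hGc n
  -- ψ is fixed by every P i
  have hPψ : ∀ i, P i *ᵥ ψ = ψ := (hfix ψ).mpr ⟨1, (one_smul _ _).symm⟩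
  -- every G k fixes ψ
  have hGψ : ∀ k, G k *ᵥ ψ = ψ := by
    intro k
    by_cases h : k < n
    · simp only [hG, dif_pos h]
      rw [smul_mulVec, add_mulVec, one_mulVec, hPψ]
      rw [← two_smul ℂ ψ, smul_smul]
      norm_num
    · simp only [hG, dif_neg h, one_mulVec]
  have hFψ : ∀ k, F G k *ᵥ ψ = ψ := by
    intro k
    induction k with
    | zero => simp [F]
    | succ k ih =>
      show (F G k * G k) *ᵥ ψ = ψ
      rw [← mulVec_mulVec, hGψ, ih]
  -- P j absorbs the product once j occurs in it
  have hPF : ∀ j : Fin n, ∀ k, j.val < k → P j * F G k = F G k := by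
    intro j k
    induction k with
    | zero => omega
    | succ k ih =>
      intro hjk
      have hcomGj : ∀ l, Commute (P j) (G l) := by
        intro l
        by_cases h : l < n
        · simp only [hG, dif_pos h]
          apply Commute.smul_right
          apply Commute.add_right
          · exact Commute.one_right _
          · exact hcomm _ _
        · simp only [hG, dif_neg h]; exact Commute.one_right _
      rcases Nat.lt_succ_iff_lt_or_eq.mp hjk with h | h
      · show P j * (F G k * G k) = F G k * G k
        rw [← mul_assoc, ih h]
      · -- j.val = k
        have hkn : k < n := h ▸ j.isLt
        have hjeq : P j * G k = G k := by
          have hj : j = ⟨k, hkn⟩ := by ext; exact h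
          simp only [hG, dif_pos hkn]
          rw [mul_smul_comm, mul_add, mul_one, ← hj]
          have hP2 : P j * P j = 1 := by rw [← pow_two]; exact hsq _
          rw [hP2, add_comm]
        show P j * (F G k * G k) = F G k * G k
        have hcm : Commute (P j) (F G k) := commute_F G (P j) hcomGj k
        rw [← mul_assoc, hcm.eq, mul_assoc, hjeq]
  -- Pr maps every vector into the fixed space, hence Pr v = ⟨ψ, v⟩ • ψ
  have hPrv : ∀ v : Fin d → ℂ, Pr *ᵥ v = (star ψ ⬝ᵥ v) • ψ := by
    intro v
    obtain ⟨c, hcv⟩ := (hfix (Pr *ᵥ v)).mp (by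
      intro i
      rw [mulVec_mulVec, hPF i n i.isLt])
    have hrow : star ψ ᵥ* Pr = star ψ := by
      have h1 : star (Pr *ᵥ ψ) = star ψ ᵥ* Prᴴ := star_mulVec Pr ψ
      rw [hFψ n, hPrH.eq] at h1
      exact h1.symm
    have hc : c = star ψ ⬝ᵥ v := by
      have h2 : star ψ ⬝ᵥ (Pr *ᵥ v) = star ψ ⬝ᵥ v := by
        rw [dotProduct_mulVec, hrow]
      rw [hcv] at h2
      rw [dotProduct_smul, hψ, smul_eq_mul, mul_one] at h2
      exact h2
    rw [hcv, hc]
  -- trace of ρ Pr equals the fidelity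
  have htrPr : (ρ * Pr).trace = star ψ ⬝ᵥ (ρ *ᵥ ψ) := by
    rw [Matrix.trace_mul_comm, Matrix.trace]
    have hdiag : ∀ y, (Pr * ρ) y y = (∑ j, (star ψ) j * ρ j y) * ψ y := by
      intro y
      have h := congrFun (hPrv (fun j => ρ j y)) y
      simpa [mulVec, dotProduct, mul_apply, Matrix.mul_apply] using h
    simp only [diag_apply, hdiag, dotProduct, mulVec]
    simp only [Finset.sum_mul, Finset.mul_sum, mul_assoc]
    exact Finset.sum_comm
  -- the union bound, evaluated in the state ρ
  have hM := union_bound G hGH hGc hGid n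
  have h0 : 0 ≤ ((ρ * ((∑ i ∈ Finset.range n, (1 - G i)) + Pr - 1)).trace).re :=
    trace_mul_psd_nonneg hρ hM
  -- expand the trace
  have hexpand : (ρ * ((∑ i ∈ Finset.range n, (1 - G i)) + Pr - 1)).trace
      = (∑ i ∈ Finset.range n, (ρ * (1 - G i)).trace) + (ρ * Pr).trace - 1 := by
    rw [mul_sub, mul_add, Finset.mul_sum, mul_one, trace_sub, trace_add, trace_sum, htr]
  -- bound each stabilizer term
  have hterm : ∀ i : Fin n, ((ρ * (1 - G i.val)).trace).re ≤ ε i / 2 := by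
    intro i
    have hGi : G i.val = (2⁻¹ : ℂ) • (1 + P i) := by
      simp only [hG, dif_pos i.isLt]
    have h1 : (ρ * (1 - G i.val)).trace = 1 - (2⁻¹ : ℂ) * (1 + (ρ * P i).trace) := by
      rw [hGi, mul_sub, mul_one, trace_sub, htr, mul_smul_comm, trace_smul, mul_add,
        mul_one, trace_add, htr, smul_eq_mul]
    rw [h1]
    have := hexp i
    have hre : ((1 : ℂ) - (2⁻¹ : ℂ) * (1 + (ρ * P i).trace)).re
        = 1 - (1 + ((ρ * P i).trace).re) / 2 := by
      simp [Complex.sub_re, Complex.mul_re, Complex.add_re]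
      try ring
    rw [hre]
    linarith
  -- sum over all stabilizers
  have hsum : (∑ i ∈ Finset.range n, (ρ * (1 - G i)).trace).re ≤ (∑ i, ε i) / 2 := by
    rw [Complex.re_sum]
    have : ∑ i ∈ Finset.range n, ((ρ * (1 - G i)).trace).re
        = ∑ i : Fin n, ((ρ * (1 - G i.val)).trace).re := by
      exact (Fin.sum_univ_eq_sum_range (fun k => ((ρ * (1 - G k)).trace).re) n).symm
    rw [this, Finset.sum_div]
    exact Finset.sum_le_sum fun i _ => hterm i
  rw [hexpand] at h0
  rw [Complex.sub_re, Complex.add_re, htrPr] at h0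
  simp only [Complex.one_re] at h0
  linarith
end

section
/- Let U be a Hermitian complex d×d matrix with U² = 1, let ψ ∈ ℂ^d be a unit vector with Uψ = ψ, let ρ be a complex d×d matrix that is positive semidefinite with trace 1, and let ε ≥ 0. If Re(tr(ρ·U)) < 1 − ε, then the fidelity satisfies ⟨ψ|ρ|ψ⟩ < 1 − ε/2. (Lemma 3.) -/
open Matrix
open scoped ComplexOrder

lemma aux_trace_nonneg {d : ℕ} {M : Matrix (Fin d) (Fin d) ℂ} (hM : M.PosSemidef) :
    0 ≤ M.trace := by
  apply Finset.sum_nonneg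
  intro i _
  have := hM.dotProduct_mulVec_nonneg (Pi.single i 1)
  simpa [dotProduct, Pi.single_apply, mulVec] using this

lemma aux_trace_mul_nonneg {d : ℕ} {A B : Matrix (Fin d) (Fin d) ℂ}
    (hA : A.PosSemidef) (hB : B.PosSemidef) : 0 ≤ (A * B).trace := by
  obtain ⟨C, rfl⟩ : ∃ C : Matrix (Fin d) (Fin d) ℂ, B = Cᴴ * C := by
    open scoped MatrixOrder Matrix.Norms.L2Operator in exact CStarAlgebra.nonneg_iff_eq_star_mul_self.mp hB.nonneg
  have h : (A * (Cᴴ * C)).trace = (C * A * Cᴴ).trace := by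
    rw [← Matrix.mul_assoc, Matrix.trace_mul_comm, Matrix.mul_assoc]
  rw [h]
  exact aux_trace_nonneg (hA.mul_mul_conjTranspose_same C)

/-- Lemma 3: if `ψ` is a unit vector fixed by the Hermitian involution `U` and the
quantum state `ρ` satisfies `Re tr(ρU) < 1 − ε`, then the fidelity satisfies
`⟨ψ|ρ|ψ⟩ < 1 − ε/2`. -/
theorem fidelity_upper_bound_from_symmetry
    (d : ℕ)
    (U : Matrix (Fin d) (Fin d) ℂ)
    (hHerm : U.IsHermitian) (hsq : U ^ 2 = 1)
    (ψ : Fin d → ℂ) (hψ : star ψ ⬝ᵥ ψ = 1) (hstab : U *ᵥ ψ = ψ)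
    (ρ : Matrix (Fin d) (Fin d) ℂ)
    (hρ : ρ.PosSemidef) (htr : ρ.trace = 1)
    (ε : ℝ) (hε : 0 ≤ ε)
    (hexp : ((ρ * U).trace).re < 1 - ε) :
    (star ψ ⬝ᵥ (ρ *ᵥ ψ)).re < 1 - ε / 2 := by
  obtain ⟨P, hP⟩ : ∃ P : Matrix (Fin d) (Fin d) ℂ, P = (2:ℂ)⁻¹ • (1 + U) := ⟨_, rfl⟩
  obtain ⟨Q, hQ⟩ : ∃ Q : Matrix (Fin d) (Fin d) ℂ, Q = vecMulVec ψ (star ψ) := ⟨_, rfl⟩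
  have hPherm : P.IsHermitian := by
    rw [hP, IsHermitian, conjTranspose_smul, conjTranspose_add, conjTranspose_one, hHerm.eq]
    norm_num
  have hPsq : P * P = P := by
    have hUU : U * U = 1 := by rw [← pow_two, hsq]
    rw [hP, smul_mul_smul_comm, mul_add, mul_one, add_mul, one_mul, hUU]
    have h1 : (1 : Matrix (Fin d) (Fin d) ℂ) + U + (U + 1) = (2:ℂ) • (1 + U) := by
      rw [two_smul]; abel
    rw [h1, smul_smul]
    norm_num
  have hPψ : P *ᵥ ψ = ψ := by
    rw [hP, smul_mulVec, add_mulVec, one_mulVec, hstab]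
    ext i
    simp
    ring
  have hQherm : Q.IsHermitian := by
    ext i j
    simp [hQ, conjTranspose_apply, vecMulVec_apply, mul_comm]
  have hPQ : P * Q = Q := by
    ext i j
    rw [hQ, mul_apply]
    simp only [vecMulVec_apply]
    calc ∑ k, P i k * (ψ k * star ψ j) = (∑ k, P i k * ψ k) * star ψ j := by
          rw [Finset.sum_mul]; exact Finset.sum_congr rfl fun k _ => by ring
      _ = (P *ᵥ ψ) i * star ψ j := rfl
      _ = ψ i * star ψ j := by rw [hPψ]
  have hQP : Q * P = Q := by
    have h := congrArg conjTranspose hPQ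
    rwa [conjTranspose_mul, hPherm.eq, hQherm.eq] at h
  have hQQ : Q * Q = Q := by
    ext i j
    rw [hQ, mul_apply]
    simp only [vecMulVec_apply]
    calc ∑ k, ψ i * star ψ k * (ψ k * star ψ j)
        = ψ i * (∑ k, star ψ k * ψ k) * star ψ j := by
          rw [Finset.mul_sum, Finset.sum_mul]; exact Finset.sum_congr rfl fun k _ => by ring
      _ = ψ i * (star ψ ⬝ᵥ ψ) * star ψ j := rfl
      _ = ψ i * star ψ j := by rw [hψ]; ring
  have hMherm : (P - Q).IsHermitian := hPherm.sub hQherm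
  have hMsq : (P - Q) * (P - Q) = P - Q := by
    rw [sub_mul, mul_sub, mul_sub, hPsq, hPQ, hQP, hQQ]
    abel
  have hMpsd : (P - Q).PosSemidef := by
    have h : (P - Q) = (P - Q)ᴴ * (P - Q) := by rw [hMherm.eq, hMsq]
    rw [h]
    exact posSemidef_conjTranspose_mul_self _
  have key : 0 ≤ (ρ * (P - Q)).trace := aux_trace_mul_nonneg hρ hMpsd
  have hfid : (ρ * Q).trace = star ψ ⬝ᵥ (ρ *ᵥ ψ) := by
    rw [hQ]
    simp only [trace, diag_apply, mul_apply, vecMulVec_apply, dotProduct, mulVec,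
      Finset.mul_sum]
    exact Finset.sum_congr rfl fun i _ => Finset.sum_congr rfl fun j _ => by ring
  have hPtr : (ρ * P).trace = (((1:ℝ)/2 : ℝ) : ℂ) * (1 + (ρ * U).trace) := by
    rw [hP, Matrix.mul_smul, trace_smul, mul_add, mul_one, trace_add, htr]
    norm_num [mul_add]
  have hsplit : (ρ * (P - Q)).trace = (ρ * P).trace - (ρ * Q).trace := by
    rw [Matrix.mul_sub, trace_sub]
  rw [hsplit, hfid, hPtr] at key
  have h1 := (Complex.le_def.mp key).1
  simp only [Complex.zero_re, Complex.sub_re, Complex.mul_re, Complex.ofReal_re,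
    Complex.ofReal_im, Complex.add_re, Complex.one_re, zero_mul, sub_zero] at h1
  linarith
end

section
/- For every natural number N ≥ 1, the identity 8 · Σ_{k=1}^{N} C(N,k)·C(k+2,2) = 2^N·(N² + 7N + 8) − 8 holds, where C(·,·) denotes the binomial coefficient. (This is the paper's counting formula 𝒩(N) = Σ_{k=1}^{N} C(N,k)·C(k+2,2) = 2^{N−3}(N² + 7N + 8) − 1 for the number of independent symmetrized operators accessible by uniform measurements on N qubits, cleared of the denominator 8.) -/
open Finset

lemma pascal_sum (n : ℕ) (f : ℕ → ℕ) :
    ∑ k ∈ range (n + 2), (n + 1).choose k * f k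
      = ∑ k ∈ range (n + 1), n.choose k * f k
        + ∑ k ∈ range (n + 1), n.choose k * f (k + 1) := by
  rw [Finset.sum_range_succ' (fun k => (n + 1).choose k * f k)]
  simp only [Nat.choose_succ_succ, add_mul, Finset.sum_add_distrib, Nat.choose_zero_right,
    one_mul]
  have h : ∑ k ∈ range (n + 1), n.choose (k + 1) * f (k + 1) + n.choose 0 * f 0
      = ∑ k ∈ range (n + 1), n.choose k * f k := by
    rw [← Finset.sum_range_succ' (fun k => n.choose k * f k) (n + 1),
      Finset.sum_range_succ, Nat.choose_succ_self]
    simp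
  simp only [Nat.choose_zero_right, one_mul] at h
  simp only [Nat.succ_eq_add_one]
  omega

lemma U_sum (n : ℕ) :
    2 * ∑ k ∈ range (n + 1), n.choose k * (k + 2) = 2 ^ n * (n + 4) := by
  induction n with
  | zero => simp
  | succ n ih =>
    rw [pascal_sum n (fun k => k + 2)]
    have h2 : ∑ k ∈ range (n + 1), n.choose k * (k + 1 + 2)
        = ∑ k ∈ range (n + 1), n.choose k * (k + 2)
          + ∑ k ∈ range (n + 1), n.choose k := by
      rw [← Finset.sum_add_distrib]; apply Finset.sum_congr rfl; intros; ring
    rw [h2, Nat.sum_range_choose]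
    ring_nf
    ring_nf at ih
    omega

lemma T_sum (n : ℕ) :
    8 * ∑ k ∈ range (n + 1), n.choose k * (k + 2).choose 2
      = 2 ^ n * (n ^ 2 + 7 * n + 8) := by
  induction n with
  | zero => simp
  | succ n ih =>
    rw [pascal_sum n (fun k => (k + 2).choose 2)]
    have h2 : ∑ k ∈ range (n + 1), n.choose k * (k + 1 + 2).choose 2
        = ∑ k ∈ range (n + 1), n.choose k * (k + 2).choose 2
          + ∑ k ∈ range (n + 1), n.choose k * (k + 2) := by
      rw [← Finset.sum_add_distrib]; apply Finset.sum_congr rfl; intro k _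
      rw [← Nat.mul_add]
      congr 1
      have : k + 1 + 2 = (k + 2) + 1 := by ring
      rw [this, Nat.choose_succ_succ (k + 2) 1, Nat.choose_one_right]
      simp only [Nat.succ_eq_add_one, Nat.reduceAdd]
      omega
    rw [h2]
    have hU := U_sum n
    rw [pow_succ]
    ring_nf
    ring_nf at ih hU
    nlinarith [ih, hU]

/-- The paper's counting formula for the number of independent symmetrized operators
accessible by uniform measurements on `N` qubits, cleared of the denominator 8:
`8 · Σ_{k=1}^{N} C(N,k)·C(k+2,2) = 2^N·(N² + 7N + 8) − 8`. -/
theorem uniform_measurement_operator_count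
    (N : ℕ) (hN : 1 ≤ N) :
    8 * ∑ k ∈ Finset.Icc 1 N, N.choose k * (k + 2).choose 2
      = 2 ^ N * (N ^ 2 + 7 * N + 8) - 8 := by
  have hset : Finset.range (N + 1) = insert 0 (Finset.Icc 1 N) := by
    ext x; simp [Finset.mem_range, Finset.mem_Icc]; omega
  have hT := T_sum N
  rw [hset, Finset.sum_insert (by simp)] at hT
  simp at hT
  have h8 : 8 ≤ 2 ^ N * (N ^ 2 + 7 * N + 8) :=
    calc 8 = 1 * 8 := by ring
    _ ≤ 2 ^ N * (N ^ 2 + 7 * N + 8) :=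
        Nat.mul_le_mul (Nat.one_le_two_pow) (by omega)
  omega
end

section
/- Let N ≥ 3 be odd and let ψ_g be the 1D graph state with amplitudes ψ_g(b) = 2^{−N/2}·(−1)^{Σ_{i=0}^{N−2} (b i)·(b (i+1))}. Then the uniform X-string over the even 0-based sites, U_X = ∏_{i ∈ {0,2,…,N−1}} X_i, satisfies U_X ψ_g = ψ_g. (The ℤ₂ symmetry of the 1D graph state that makes uniform certification possible; these are the odd sites 1, 3, …, N in the paper's 1-based labeling.) -/
open Matrix
open scoped ComplexOrder

lemma fin2_ne_add_one (x : Fin 2) : x ≠ x + 1 := by fin_cases x <;> decide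

lemma fin2_eq_add_one_of_ne {x y : Fin 2} (h : x ≠ y) : y = x + 1 := by
  revert h; fin_cases x <;> fin_cases y <;> decide

lemma fin2_cast_add_one (x : Fin 2) :
    (((x + 1 : Fin 2) : ℕ) : ZMod 2) = ((x : ℕ) : ZMod 2) + 1 := by
  fin_cases x <;> decide

lemma pauliX_mulVec {N : ℕ} (i : Fin N) (v : (Fin N → Fin 2) → ℂ) :
    PauliX N i *ᵥ v = fun f => v (Function.update f i (f i + 1)) := by
  funext f
  unfold PauliX
  simp only [mulVec, dotProduct, of_apply]
  rw [Finset.sum_eq_single (Function.update f i (f i + 1))]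
  · rw [if_pos, one_mul]
    refine ⟨?_, ?_⟩
    · rw [Function.update_self]; exact fin2_ne_add_one (f i)
    · intro j hj; rw [Function.update_of_ne hj]
  · intro g _ hg
    rw [if_neg, zero_mul]
    rintro ⟨h1, h2⟩
    apply hg
    funext j
    by_cases hj : j = i
    · subst hj; rw [Function.update_self]; exact fin2_eq_add_one_of_ne h1
    · rw [Function.update_of_ne hj]; exact (h2 j hj).symm
  · intro h; exact absurd (Finset.mem_univ _) h

/-- Flip the bits on the sites in `l`. -/
def flipL {N : ℕ} (l : List (Fin N)) (f : Fin N → Fin 2) : Fin N → Fin 2 :=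
  fun j => if j ∈ l then f j + 1 else f j

lemma prod_pauliX_mulVec {N : ℕ} (l : List (Fin N)) (hl : l.Nodup)
    (v : (Fin N → Fin 2) → ℂ) :
    (l.map (PauliX N)).prod *ᵥ v = fun f => v (flipL l f) := by
  induction l with
  | nil =>
      funext f
      rw [List.map_nil, List.prod_nil, one_mulVec]
      have hf : flipL ([] : List (Fin N)) f = f := by
        funext j; simp [flipL]
      rw [hf]
  | cons a l ih =>
      obtain ⟨ha, hl'⟩ := List.nodup_cons.mp hl
      funext f
      rw [List.map_cons, List.prod_cons, ← mulVec_mulVec, ih hl', pauliX_mulVec]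
      show v (flipL l (Function.update f a (f a + 1))) = v (flipL (a :: l) f)
      congr 1
      funext j
      by_cases hj : j = a
      · subst hj
        simp [flipL, if_neg ha, Function.update_self]
      · simp [flipL, Function.update_of_ne hj, List.mem_cons, hj]

lemma UX_mulVec {N : ℕ} (v : (Fin N → Fin 2) → ℂ) :
    UX N *ᵥ v = fun f => v (fun j => if (j : ℕ) % 2 = 0 then f j + 1 else f j) := by
  unfold UX
  rw [prod_pauliX_mulVec _ ((List.nodup_finRange N).filter _)]
  funext f
  congr 1
  funext j
  simp [flipL, List.mem_filter]

/-- `i`-th bit as a natural number, extended by `0`. -/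
def bitN {N : ℕ} (b : Fin N → Fin 2) (i : ℕ) : ℕ :=
  if h : i < N then (b ⟨i, h⟩ : ℕ) else 0

lemma graphSum_eq {N : ℕ} (hN : 1 ≤ N) (b : Fin N → Fin 2) :
    (∑ i : Fin N, if h : (i : ℕ) + 1 < N then
        (b i : ℕ) * (b ⟨(i : ℕ) + 1, h⟩ : ℕ) else 0)
      = ∑ i ∈ Finset.range (N - 1), bitN b i * bitN b (i + 1) := by
  have step : ∀ i : Fin N,
      (if h : (i : ℕ) + 1 < N then (b i : ℕ) * (b ⟨(i : ℕ) + 1, h⟩ : ℕ) else 0)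
        = (if (i : ℕ) + 1 < N then bitN b i * bitN b ((i : ℕ) + 1) else 0) := by
    intro i
    by_cases h : (i : ℕ) + 1 < N
    · rw [dif_pos h, if_pos h]
      unfold bitN
      rw [dif_pos i.isLt, dif_pos h, Fin.eta]
    · rw [dif_neg h, if_neg h]
  calc (∑ i : Fin N, if h : (i : ℕ) + 1 < N then
          (b i : ℕ) * (b ⟨(i : ℕ) + 1, h⟩ : ℕ) else 0)
      = ∑ i : Fin N, (if (i : ℕ) + 1 < N then bitN b (i : ℕ) * bitN b ((i : ℕ) + 1) else 0) :=
        Finset.sum_congr rfl (fun i _ => step i)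
    _ = ∑ i ∈ Finset.range N, (if i + 1 < N then bitN b i * bitN b (i + 1) else 0) :=
        Fin.sum_univ_eq_sum_range (fun i => if i + 1 < N then bitN b i * bitN b (i + 1) else 0) N
    _ = ∑ i ∈ Finset.range ((N - 1) + 1),
          (if i + 1 < N then bitN b i * bitN b (i + 1) else 0) := by
        have hNN : N - 1 + 1 = N := by omega
        rw [hNN]
    _ = (∑ i ∈ Finset.range (N - 1), (if i + 1 < N then bitN b i * bitN b (i + 1) else 0))
          + (if (N - 1) + 1 < N then bitN b (N - 1) * bitN b (N - 1 + 1) else 0) :=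
        Finset.sum_range_succ _ _
    _ = ∑ i ∈ Finset.range (N - 1), bitN b i * bitN b (i + 1) := by
        rw [if_neg (by omega), add_zero]
        exact Finset.sum_congr rfl (fun i hi => by
          rw [if_pos (by have := Finset.mem_range.mp hi; omega)])

lemma even_pair_sum (g : ℕ → ZMod 2) (m : ℕ) :
    ∑ i ∈ Finset.range (2 * m),
      ((if i % 2 = 0 then (1 : ZMod 2) else 0) * g (i + 1)
        + g i * (if (i + 1) % 2 = 0 then 1 else 0)) = 0 := by
  induction m with
  | zero => simp
  | succ m ih =>
      have h2 : 2 * (m + 1) = (2 * m + 1) + 1 := by ring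
      rw [h2, Finset.sum_range_succ, Finset.sum_range_succ, ih]
      rw [if_pos (by omega : (2 * m) % 2 = 0),
          if_neg (by omega : ¬ (2 * m + 1) % 2 = 0),
          if_pos (by omega : (2 * m + 1 + 1) % 2 = 0)]
      simp [CharTwo.add_self_eq_zero]

/-- The ℤ₂ symmetry of the 1D graph state: the uniform `X`-string over the even
0-based sites fixes the 1D graph state, `U_X ψ_g = ψ_g`. -/
theorem graphState_UX_symmetry
    (N : ℕ) (hN : 3 ≤ N) (hodd : Odd N) :
    UX N *ᵥ graphState N = graphState N := by
  rw [UX_mulVec]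
  funext b
  show graphState N (fun j => if (j : ℕ) % 2 = 0 then b j + 1 else b j) = graphState N b
  set b' : Fin N → Fin 2 := fun j => if (j : ℕ) % 2 = 0 then b j + 1 else b j with hb'
  unfold graphState
  congr 1
  rw [graphSum_eq (by omega) b', graphSum_eq (by omega) b]
  -- reduce to a congruence mod 2
  have key : (∑ i ∈ Finset.range (N - 1), bitN b' i * bitN b' (i + 1))
      ≡ (∑ i ∈ Finset.range (N - 1), bitN b i * bitN b (i + 1)) [MOD 2] := by
    rw [← ZMod.natCast_eq_natCast_iff]
    push_cast
    -- pointwise relation between the flipped and original bits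
    have hbit : ∀ i : ℕ, i < N →
        ((bitN b' i : ℕ) : ZMod 2)
          = ((bitN b i : ℕ) : ZMod 2) + (if i % 2 = 0 then 1 else 0) := by
      intro i hi
      unfold bitN
      rw [dif_pos hi, dif_pos hi]
      have hb'i : b' ⟨i, hi⟩ = if i % 2 = 0 then b ⟨i, hi⟩ + 1 else b ⟨i, hi⟩ := rfl
      rw [hb'i]
      by_cases h : i % 2 = 0
      · rw [if_pos h, if_pos h, fin2_cast_add_one]
      · rw [if_neg h, if_neg h, add_zero]
    obtain ⟨m, hm⟩ := hodd
    have hm' : N - 1 = 2 * m := by omega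
    calc (∑ i ∈ Finset.range (N - 1), ((bitN b' i : ℕ) : ZMod 2) * ((bitN b' (i+1) : ℕ) : ZMod 2))
        = ∑ i ∈ Finset.range (N - 1),
            (((bitN b i : ℕ) : ZMod 2) * ((bitN b (i+1) : ℕ) : ZMod 2)
              + ((if i % 2 = 0 then (1 : ZMod 2) else 0) * ((bitN b (i+1) : ℕ) : ZMod 2)
                + ((bitN b i : ℕ) : ZMod 2) * (if (i+1) % 2 = 0 then 1 else 0))) := by
          refine Finset.sum_congr rfl (fun i hi => ?_)
          have hiN : i < N := by have := Finset.mem_range.mp hi; omega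
          have hiN1 : i + 1 < N := by have := Finset.mem_range.mp hi; omega
          rw [hbit i hiN, hbit (i + 1) hiN1]
          by_cases h : i % 2 = 0
          · have h1 : ¬ (i + 1) % 2 = 0 := by omega
            simp only [h, h1, if_true, if_false, ite_true, ite_false, if_pos, if_neg,
              not_false_iff]
            ring
          · have h1 : (i + 1) % 2 = 0 := by omega
            simp only [h, h1, if_true, if_false, ite_true, ite_false]
            ring
      _ = (∑ i ∈ Finset.range (N - 1), ((bitN b i : ℕ) : ZMod 2) * ((bitN b (i+1) : ℕ) : ZMod 2))
            + ∑ i ∈ Finset.range (N - 1),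
              ((if i % 2 = 0 then (1 : ZMod 2) else 0) * ((bitN b (i+1) : ℕ) : ZMod 2)
                + ((bitN b i : ℕ) : ZMod 2) * (if (i+1) % 2 = 0 then 1 else 0)) :=
          Finset.sum_add_distrib
      _ = ∑ i ∈ Finset.range (N - 1), ((bitN b i : ℕ) : ZMod 2) * ((bitN b (i+1) : ℕ) : ZMod 2) := by
          rw [hm', even_pair_sum (fun i => ((bitN b i : ℕ) : ZMod 2)) m, add_zero]
  rw [neg_one_pow_eq_pow_mod_two, key, ← neg_one_pow_eq_pow_mod_two]
end
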